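/- Let N1 ≥ 1 and N2 ≥ 1 be integers and let D_na = {0, 1, ..., N1−1} ∪ {(m+1)(N1+1)−1 : 0 ≤ m ≤ N2−1} be the nested array position set with M = N1 + N2. Then the beam pattern G(Δ; D_na) = (1/M²)|Σ_{d∈D_na} exp(iπ d Δ)|² is strictly decreasing in Δ on the interval (0, 1/((N1+1)N2)]. In particular, the first local minimum point of G(·; D_na) is at least 1/((N1+1)N2). -/

import Mathlib

open Finset

/-- Two-level nested array position set. -/
def Dna (N1 N2 : ℕ) : Finset ℕ :=
  Finset.range N1 ∪ (Finset.range N2).image (fun m => (m + 1) * (N1 + 1) - 1)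

/-- Beam pattern of the nested array (`M = N1 + N2`). -/
noncomputable def Gna (N1 N2 : ℕ) (Δ : ℝ) : ℝ :=
  (1 / ((N1 : ℝ) + (N2 : ℝ)) ^ 2) *
    ‖∑ d ∈ Dna N1 N2, Complex.exp (Complex.I * Real.pi * (d : ℝ) * Δ)‖ ^ 2

lemma Dna_lt (N1 N2 : ℕ) (hN2 : 1 ≤ N2) :
    ∀ d ∈ Dna N1 N2, d < (N1 + 1) * N2 := by
  intro d hd
  simp only [Dna, Finset.mem_union, Finset.mem_range, Finset.mem_image] at hd
  rcases hd with h | ⟨m, hm, rfl⟩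
  · calc d < N1 := h
      _ ≤ (N1 + 1) * N2 := by nlinarith
  · have h1 : (m + 1) * (N1 + 1) ≤ N2 * (N1 + 1) := Nat.mul_le_mul_right _ (by omega)
    have h2 : 1 ≤ (m + 1) * (N1 + 1) := Nat.one_le_iff_ne_zero.mpr (Nat.mul_ne_zero (by omega) (by omega))
    calc (m + 1) * (N1 + 1) - 1 < (m + 1) * (N1 + 1) := by omega
      _ ≤ N2 * (N1 + 1) := h1
      _ = (N1 + 1) * N2 := Nat.mul_comm _ _

lemma N1_mem (N1 N2 : ℕ) (hN2 : 1 ≤ N2) : N1 ∈ Dna N1 N2 := by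
  simp only [Dna, Finset.mem_union, Finset.mem_range, Finset.mem_image]
  right; exact ⟨0, by omega, by omega⟩

lemma zero_mem (N1 N2 : ℕ) (hN1 : 1 ≤ N1) : 0 ∈ Dna N1 N2 := by
  simp only [Dna, Finset.mem_union, Finset.mem_range]
  left; omega

lemma abs_sq_eq (D : Finset ℕ) (Δ : ℝ) :
    ‖∑ d ∈ D, Complex.exp (Complex.I * Real.pi * (d : ℝ) * Δ)‖ ^ 2
      = ∑ p ∈ D ×ˢ D, Real.cos (Real.pi * ((p.1 : ℝ) - (p.2 : ℝ)) * Δ) := by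
  have key : ∀ d : ℕ, Complex.I * Real.pi * (d : ℝ) * Δ
      = ((Real.pi * (d : ℝ) * Δ : ℝ) : ℂ) * Complex.I := by
    intro d; push_cast; ring
  simp_rw [key]
  rw [Complex.sq_norm, Complex.normSq_apply, Complex.re_sum, Complex.im_sum]
  simp_rw [Complex.exp_ofReal_mul_I_re, Complex.exp_ofReal_mul_I_im]
  rw [Finset.sum_mul_sum, Finset.sum_mul_sum, Finset.sum_product]
  rw [← Finset.sum_add_distrib]
  refine Finset.sum_congr rfl fun d _ => ?_
  rw [← Finset.sum_add_distrib]
  refine Finset.sum_congr rfl fun e _ => ?_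
  rw [show Real.pi * ((d : ℝ) - (e : ℝ)) * Δ
      = Real.pi * (d : ℝ) * Δ - Real.pi * (e : ℝ) * Δ by ring, Real.cos_sub]

theorem nested_beam_pattern_strictAnti (N1 N2 : ℕ) (hN1 : 1 ≤ N1) (hN2 : 1 ≤ N2) :
    StrictAntiOn (Gna N1 N2) (Set.Ioc 0 (1 / (((N1 : ℝ) + 1) * (N2 : ℝ)))) ∧
      ∀ Δ : ℝ, 0 < Δ → IsLocalMin (Gna N1 N2) Δ →
        1 / (((N1 : ℝ) + 1) * (N2 : ℝ)) ≤ Δ := by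
  set B : ℝ := 1 / (((N1 : ℝ) + 1) * (N2 : ℝ)) with hB
  have hC : (0 : ℝ) < ((N1 : ℝ) + 1) * (N2 : ℝ) := by positivity
  have hBC : B * (((N1 : ℝ) + 1) * (N2 : ℝ)) = 1 := by
    rw [hB]; field_simp
  have hBpos : 0 < B := by rw [hB]; positivity
  have hanti : StrictAntiOn (Gna N1 N2) (Set.Ioc 0 B) := by
    intro x hx y hy hxy
    obtain ⟨hx0, hxB⟩ := hx
    obtain ⟨hy0, hyB⟩ := hy
    simp only [Gna, abs_sq_eq]
    have hM : (0 : ℝ) < 1 / ((N1 : ℝ) + (N2 : ℝ)) ^ 2 := by positivity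
    apply mul_lt_mul_of_pos_left _ hM
    have hterm : ∀ d ∈ Dna N1 N2, ∀ e ∈ Dna N1 N2,
        Real.cos (Real.pi * ((d : ℝ) - (e : ℝ)) * y)
          ≤ Real.cos (Real.pi * ((d : ℝ) - (e : ℝ)) * x) ∧
        (d ≠ e → Real.cos (Real.pi * ((d : ℝ) - (e : ℝ)) * y)
          < Real.cos (Real.pi * ((d : ℝ) - (e : ℝ)) * x)) := by
      intro d hd e he
      have hdlt : (d : ℝ) < ((N1 : ℝ) + 1) * (N2 : ℝ) := by
        have := Dna_lt N1 N2 hN2 d hd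
        have := (Nat.cast_lt (α := ℝ)).mpr this
        push_cast at this ⊢; linarith
      have helt : (e : ℝ) < ((N1 : ℝ) + 1) * (N2 : ℝ) := by
        have := Dna_lt N1 N2 hN2 e he
        have := (Nat.cast_lt (α := ℝ)).mpr this
        push_cast at this ⊢; linarith
      have hd0 : (0 : ℝ) ≤ (d : ℝ) := Nat.cast_nonneg d
      have he0 : (0 : ℝ) ≤ (e : ℝ) := Nat.cast_nonneg e
      set r : ℝ := |(d : ℝ) - (e : ℝ)| with hr
      have hrnn : 0 ≤ r := abs_nonneg _
      have hrlt : r < ((N1 : ℝ) + 1) * (N2 : ℝ) := by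
        rw [hr, abs_sub_lt_iff]; constructor <;> linarith
      have heq : ∀ t : ℝ, 0 < t →
          Real.cos (Real.pi * ((d : ℝ) - (e : ℝ)) * t) = Real.cos (Real.pi * r * t) := by
        intro t ht
        rw [← Real.cos_abs (Real.pi * ((d : ℝ) - (e : ℝ)) * t), abs_mul, abs_mul,
          abs_of_pos Real.pi_pos, abs_of_pos ht, hr]
      rw [heq x hx0, heq y hy0]
      rcases eq_or_lt_of_le hrnn with hr0 | hrpos
      · constructor
        · rw [← hr0]; simp
        · intro hde
          exfalso
          apply hde
          have : (d : ℝ) = (e : ℝ) := by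
            have := abs_eq_zero.mp hr0.symm; linarith
          exact_mod_cast this
      · have hargx : 0 ≤ Real.pi * r * x := by positivity
        have hargy_le : Real.pi * r * y ≤ Real.pi := by
          have h1 : r * y ≤ r * B := by
            exact mul_le_mul_of_nonneg_left hyB hrnn
          have h2 : r * B ≤ 1 := by
            rw [hB]
            rw [mul_one_div]
            rw [div_le_one hC]
            linarith
          nlinarith [Real.pi_pos, h1.trans h2]
        have hargxy : Real.pi * r * x < Real.pi * r * y := by
          have : 0 < Real.pi * r := by positivity
          exact mul_lt_mul_of_pos_left hxy this
        have hcos := Real.strictAntiOn_cos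
          ⟨hargx, le_of_lt (lt_of_lt_of_le hargxy hargy_le)⟩
          ⟨le_of_lt (lt_of_le_of_lt hargx hargxy), hargy_le⟩ hargxy
        exact ⟨le_of_lt hcos, fun _ => hcos⟩
    apply Finset.sum_lt_sum
    · intro p hp
      rw [Finset.mem_product] at hp
      exact (hterm p.1 hp.1 p.2 hp.2).1
    · refine ⟨(N1, 0), Finset.mem_product.mpr ⟨N1_mem N1 N2 hN2, zero_mem N1 N2 hN1⟩, ?_⟩
      exact (hterm N1 (N1_mem N1 N2 hN2) 0 (zero_mem N1 N2 hN1)).2 (by omega)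
  refine ⟨hanti, ?_⟩
  intro Δ hΔpos hmin
  by_contra hlt
  push_neg at hlt
  obtain ⟨ε, hε, hball⟩ := Metric.eventually_nhds_iff.mp hmin
  set y : ℝ := min (Δ + ε / 2) B with hy
  have hyΔ : Δ < y := lt_min (by linarith) hlt
  have hyB : y ≤ B := min_le_right _ _
  have hdist : dist y Δ < ε := by
    have : y ≤ Δ + ε / 2 := min_le_left _ _
    rw [Real.dist_eq, abs_of_pos (by linarith)]
    linarith
  have h1 := hball hdist
  have h2 := hanti ⟨hΔpos, hlt.le⟩ ⟨hΔpos.trans hyΔ, hyB⟩ hyΔ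
  linarith
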